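/- arXiv:2602.02250 — 4 statements merged into one kernel-verified Lean document; each statement's English description precedes it below -/
import Mathlib

section
/- Suppose a curve of probability measures μ_t on ℝ^d satisfies μ_t = (X_t)_# μ_0, where X_t solves Ẋ_t = v_t ∘ X_t, X_0 = id, and v_t(x) = S_t x + s_t is affine in x. If μ_0 is elliptic E(m_0, Σ_0, g), then μ_t is elliptic E(m_t, Σ_t, g) for every t ≥ 0. -/
open MeasureTheory Real Matrix

/-- The density of the elliptic distribution `E(m, Σ, g)` on `ℝ^d`. -/
noncomputable def ellipticDensity {d : ℕ} (m : Fin d → ℝ)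
    (Sig : Matrix (Fin d) (Fin d) ℝ) (g : ℝ → ℝ) : (Fin d → ℝ) → ℝ :=
  fun x => (Real.sqrt Sig.det)⁻¹ * g ((x - m) ⬝ᵥ (Sig⁻¹).mulVec (x - m))

private lemma mulVec_norm_le {d : ℕ} (M : Matrix (Fin d) (Fin d) ℝ) (u : Fin d → ℝ) :
    ‖M *ᵥ u‖ ≤ (∑ i, ∑ j, |M i j|) * ‖u‖ := by
  have hnn : 0 ≤ (∑ i, ∑ j, |M i j|) * ‖u‖ :=
    mul_nonneg (Finset.sum_nonneg fun i _ => Finset.sum_nonneg fun j _ => abs_nonneg _)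
      (norm_nonneg _)
  rw [pi_norm_le_iff_of_nonneg hnn]
  intro i
  calc ‖(M *ᵥ u) i‖ = |∑ j, M i j * u j| := by rfl
    _ ≤ ∑ j, |M i j * u j| := Finset.abs_sum_le_sum_abs _ _
    _ ≤ ∑ j, |M i j| * ‖u‖ := by
        refine Finset.sum_le_sum fun j _ => ?_
        rw [abs_mul]
        exact mul_le_mul_of_nonneg_left (norm_le_pi_norm u j) (abs_nonneg _)
    _ = (∑ j, |M i j|) * ‖u‖ := (Finset.sum_mul _ _ _).symm
    _ ≤ (∑ i, ∑ j, |M i j|) * ‖u‖ := by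
        refine mul_le_mul_of_nonneg_right ?_ (norm_nonneg _)
        exact Finset.single_le_sum (f := fun k => ∑ j, |M k j|)
          (fun k _ => Finset.sum_nonneg fun j _ => abs_nonneg _) (Finset.mem_univ i)

open Set in
private lemma affine_ode_unique {d : ℕ}
    (S : ℝ → Matrix (Fin d) (Fin d) ℝ) (s : ℝ → Fin d → ℝ)
    (hS_cont : ∀ i j, Continuous (fun t => S t i j))
    (f g : ℝ → Fin d → ℝ)
    (hf : ∀ t, HasDerivAt f ((S t) *ᵥ f t + s t) t)
    (hg : ∀ t, HasDerivAt g ((S t) *ᵥ g t + s t) t)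
    (t₀ t₁ : ℝ) (h : f t₀ = g t₀) : f t₁ = g t₁ := by
  set a : ℝ := min t₀ t₁ - 1 with ha
  set b : ℝ := max t₀ t₁ + 1 with hb
  have hab : a ≤ b := by
    have := min_le_left t₀ t₁; have := le_max_left t₀ t₁; simp only [ha, hb]; linarith
  have ht₀ : t₀ ∈ Ioo a b := by
    constructor
    · have := min_le_left t₀ t₁; simp only [ha]; linarith
    · have := le_max_left t₀ t₁; simp only [hb]; linarith
  have ht₁ : t₁ ∈ Icc a b := by
    constructor
    · have := min_le_right t₀ t₁; simp only [ha]; linarith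
    · have := le_max_right t₀ t₁; simp only [hb]; linarith
  set c : ℝ → ℝ := fun τ => min (max τ a) b with hc
  have hc_mem : ∀ τ, c τ ∈ Icc a b := fun τ =>
    ⟨le_min (le_max_right τ a) hab, min_le_right _ _⟩
  have hc_eq : ∀ τ ∈ Ioo a b, c τ = τ := fun τ hτ => by
    simp only [hc]; rw [max_eq_left hτ.1.le, min_eq_left hτ.2.le]
  set N : ℝ → ℝ := fun τ => ∑ i, ∑ j, |S τ i j| with hN
  have hN_cont : Continuous N := by
    apply continuous_finset_sum; intro i _; apply continuous_finset_sum; intro j _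
    exact (hS_cont i j).abs
  obtain ⟨C, hC⟩ := (isCompact_Icc (a := a) (b := b)).exists_bound_of_continuousOn
    hN_cont.continuousOn
  set K : NNReal := C.toNNReal with hK
  have hCK : ∀ τ ∈ Icc a b, N τ ≤ (K : ℝ) := by
    intro τ hτ
    have := hC τ hτ
    rw [Real.norm_eq_abs] at this
    have h1 : N τ ≤ C := (le_abs_self _).trans this
    exact h1.trans (by rw [hK, Real.coe_toNNReal']; exact le_max_left _ _)
  set v : ℝ → (Fin d → ℝ) → (Fin d → ℝ) := fun τ x => (S (c τ)) *ᵥ x + s (c τ) with hv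
  have hlip : ∀ τ, LipschitzOnWith K (v τ) Set.univ := by
    intro τ
    apply LipschitzWith.lipschitzOnWith
    apply LipschitzWith.of_dist_le_mul
    intro x y
    have h1 : v τ x - v τ y = (S (c τ)) *ᵥ (x - y) := by
      simp only [hv, Matrix.mulVec_sub]; abel
    rw [dist_eq_norm, dist_eq_norm, h1]
    calc ‖S (c τ) *ᵥ (x - y)‖ ≤ N (c τ) * ‖x - y‖ := mulVec_norm_le _ _
      _ ≤ (K : ℝ) * ‖x - y‖ :=
        mul_le_mul_of_nonneg_right (hCK _ (hc_mem τ)) (norm_nonneg _)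
  have key : Set.EqOn f g (Icc a b) := by
    apply ODE_solution_unique_of_mem_Icc (s := fun _ => Set.univ) (fun τ _ => hlip τ) ht₀
    · exact fun τ _ => (hf τ).continuousAt.continuousWithinAt
    · intro τ hτ
      have : v τ (f τ) = S τ *ᵥ f τ + s τ := by simp only [hv, hc_eq τ hτ]
      rw [this]; exact hf τ
    · exact fun τ _ => Set.mem_univ _
    · exact fun τ _ => (hg τ).continuousAt.continuousWithinAt
    · intro τ hτ
      have : v τ (g τ) = S τ *ᵥ g τ + s τ := by simp only [hv, hc_eq τ hτ]
      rw [this]; exact hg τ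
    · exact fun τ _ => Set.mem_univ _
    · exact h
  exact key ht₁

private lemma map_equiv_withDensity {α β : Type*} [MeasurableSpace α] [MeasurableSpace β]
    (T : α ≃ᵐ β) (μ : Measure α) (f : α → ENNReal) :
    Measure.map T (μ.withDensity f) = (Measure.map T μ).withDensity (fun y => f (T.symm y)) := by
  ext s hs
  rw [Measure.map_apply T.measurable hs, withDensity_apply _ (T.measurable hs),
    withDensity_apply _ hs, Measure.restrict_map T.measurable hs,
    lintegral_map_equiv (fun y => f (T.symm y)) T]
  simp

private lemma mulVec_continuous' {d : ℕ} (A : Matrix (Fin d) (Fin d) ℝ) :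
    Continuous fun x : Fin d → ℝ => A *ᵥ x :=
  (Matrix.toLin' A).continuous_of_finiteDimensional.congr fun x => Matrix.toLin'_apply A x

/-- affine measurable equivalence -/
noncomputable def affEquiv {d : ℕ} (A : Matrix (Fin d) (Fin d) ℝ) (hA : IsUnit A.det)
    (a : Fin d → ℝ) : (Fin d → ℝ) ≃ᵐ (Fin d → ℝ) where
  toFun := fun x => A *ᵥ x + a
  invFun := fun y => A⁻¹ *ᵥ (y - a)
  left_inv := fun x => by
    simp only [add_sub_cancel_right, Matrix.mulVec_mulVec,
      Matrix.nonsing_inv_mul A hA, Matrix.one_mulVec]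
  right_inv := fun y => by
    simp only [Matrix.mulVec_mulVec,
      Matrix.mul_nonsing_inv A hA, Matrix.one_mulVec, sub_add_cancel]
  measurable_toFun := ((mulVec_continuous' A).add continuous_const).measurable
  measurable_invFun :=
    ((mulVec_continuous' A⁻¹).comp (continuous_id.sub continuous_const)).measurable

private lemma map_affEquiv_volume {d : ℕ} (A : Matrix (Fin d) (Fin d) ℝ) (hA : IsUnit A.det)
    (a : Fin d → ℝ) :
    Measure.map (affEquiv A hA a) volume = ENNReal.ofReal |A.det|⁻¹ • volume := by
  have hdet : A.det ≠ 0 := by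
    intro h0; rw [h0] at hA; exact (by simp : ¬ IsUnit (0:ℝ)) hA
  have h1 : ⇑(affEquiv A hA a) = (fun y => y + a) ∘ (fun x : Fin d → ℝ => A *ᵥ x) := rfl
  rw [h1, ← Measure.map_map (measurable_add_const a) (mulVec_continuous' A).measurable]
  have h2 : (fun x : Fin d → ℝ => A *ᵥ x) = ⇑(Matrix.toLin' A) :=
    funext fun x => (Matrix.toLin'_apply A x).symm
  rw [h2, Real.map_matrix_volume_pi_eq_smul_volume_pi hdet, Measure.map_smul,
    map_add_right_eq_self volume a, abs_inv]

private lemma posDef_conj {d : ℕ} (A Sig : Matrix (Fin d) (Fin d) ℝ)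
    (hA : IsUnit A.det) (hS : Sig.PosDef) : (A * Sig * Aᵀ).PosDef := by
  have hsym : Sigᵀ = Sig := by
    have := hS.isHermitian
    rwa [Matrix.IsHermitian, Matrix.conjTranspose_eq_transpose_of_trivial] at this
  rw [Matrix.posDef_iff_dotProduct_mulVec]
  constructor
  · rw [Matrix.IsHermitian, Matrix.conjTranspose_eq_transpose_of_trivial]
    simp [Matrix.transpose_mul, hsym, Matrix.mul_assoc]
  · intro x hx
    have hz : Aᵀ *ᵥ x ≠ 0 := by
      intro h0
      apply hx
      have hinj : Function.Injective (Aᵀ.mulVec) :=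
        Matrix.mulVec_injective_iff_isUnit.mpr
          ((Matrix.isUnit_iff_isUnit_det Aᵀ).mpr (by rwa [Matrix.det_transpose]))
      have : Aᵀ *ᵥ x = Aᵀ *ᵥ 0 := by rw [h0, Matrix.mulVec_zero]
      exact hinj this
    have hq : x ⬝ᵥ ((A * Sig * Aᵀ) *ᵥ x) = (Aᵀ *ᵥ x) ⬝ᵥ (Sig *ᵥ (Aᵀ *ᵥ x)) := by
      rw [← Matrix.mulVec_mulVec, ← Matrix.mulVec_mulVec, dotProduct_mulVec x A,
        ← Matrix.mulVec_transpose A x]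
    have := hS.dotProduct_mulVec_pos hz
    simp only [star_trivial] at this ⊢
    rw [hq]; exact this

private lemma elliptic_transform {d : ℕ} (A : Matrix (Fin d) (Fin d) ℝ) (hA : IsUnit A.det)
    (a m₀ : Fin d → ℝ) (Sig₀ : Matrix (Fin d) (Fin d) ℝ) (g : ℝ → ℝ) (y : Fin d → ℝ) :
    |A.det|⁻¹ * ellipticDensity m₀ Sig₀ g (A⁻¹ *ᵥ (y - a)) =
      ellipticDensity (A *ᵥ m₀ + a) (A * Sig₀ * Aᵀ) g y := by
  have hdet : (A * Sig₀ * Aᵀ).det = A.det ^ 2 * Sig₀.det := by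
    rw [Matrix.det_mul, Matrix.det_mul, Matrix.det_transpose]; ring
  have hsqrt : Real.sqrt (A * Sig₀ * Aᵀ).det = |A.det| * Real.sqrt Sig₀.det := by
    rw [hdet, Real.sqrt_mul (sq_nonneg _), Real.sqrt_sq_eq_abs]
  have harg : (A⁻¹ *ᵥ (y - a)) - m₀ = A⁻¹ *ᵥ (y - (A *ᵥ m₀ + a)) := by
    have h1 : y - (A *ᵥ m₀ + a) = (y - a) - A *ᵥ m₀ := by abel
    rw [h1]
    simp only [Matrix.mulVec_sub, Matrix.mulVec_mulVec, Matrix.nonsing_inv_mul A hA,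
      Matrix.one_mulVec]
  have hquad : ((A⁻¹ *ᵥ (y - a)) - m₀) ⬝ᵥ (Sig₀⁻¹ *ᵥ ((A⁻¹ *ᵥ (y - a)) - m₀)) =
      (y - (A *ᵥ m₀ + a)) ⬝ᵥ ((A * Sig₀ * Aᵀ)⁻¹ *ᵥ (y - (A *ᵥ m₀ + a))) := by
    set w := y - (A *ᵥ m₀ + a) with hw
    rw [harg]
    have hinv : (A * Sig₀ * Aᵀ)⁻¹ = (Aᵀ)⁻¹ * (Sig₀⁻¹ * A⁻¹) := by
      rw [Matrix.mul_inv_rev, Matrix.mul_inv_rev]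
    rw [hinv, ← Matrix.mulVec_mulVec, dotProduct_mulVec w, ← Matrix.transpose_nonsing_inv,
      Matrix.vecMul_transpose, Matrix.mulVec_mulVec, ← Matrix.mulVec_mulVec]
  unfold ellipticDensity
  rw [hsqrt, hquad, mul_inv]
  ring

/-- if `μ_t = (X_t)_# μ_0` where `X_t` is the flow of the affine vector
field `v_t(x) = S_t x + s_t`, and `μ_0` is elliptic `E(m_0, Σ_0, g)`, then each `μ_t`,
`t ≥ 0`, is elliptic `E(m_t, Σ_t, g)` for some `m_t`, `Σ_t`. -/
theorem pushforward_affine_flow_elliptic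
    (d : ℕ) (hd : 0 < d)
    (S : ℝ → Matrix (Fin d) (Fin d) ℝ) (s : ℝ → Fin d → ℝ)
    (hS_cont : ∀ i j, Continuous (fun t => S t i j))
    (hs_cont : ∀ i, Continuous (fun t => s t i))
    (X : ℝ → (Fin d → ℝ) → (Fin d → ℝ))
    (hX0 : ∀ x, X 0 x = x)
    (hX_meas : ∀ t, Measurable (X t))
    (hX_ode : ∀ x t, ∀ i,
      HasDerivAt (fun τ => X τ x i) (((S t).mulVec (X t x) + s t) i) t)
    (g : ℝ → ℝ) (hg_pos : ∀ r, 0 ≤ r → 0 < g r)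
    (m₀ : Fin d → ℝ) (Sig₀ : Matrix (Fin d) (Fin d) ℝ) (hSig₀ : Sig₀.PosDef)
    (μ₀ : Measure (Fin d → ℝ))
    (hμ₀ : μ₀ = volume.withDensity
      (fun x => ENNReal.ofReal (ellipticDensity m₀ Sig₀ g x))) :
    ∀ t : ℝ, 0 ≤ t → ∃ (mt : Fin d → ℝ) (Sigt : Matrix (Fin d) (Fin d) ℝ),
      Sigt.PosDef ∧ Measure.map (X t) μ₀ = volume.withDensity
        (fun x => ENNReal.ofReal (ellipticDensity mt Sigt g x)) := by
  intro t ht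
  have hsol : ∀ x τ, HasDerivAt (fun τ => X τ x) ((S τ) *ᵥ (X τ x) + s τ) τ :=
    fun x τ => hasDerivAt_pi.2 (hX_ode x τ)
  set e : Fin d → (Fin d → ℝ) := fun j => Pi.single j 1 with he
  set aT : Fin d → ℝ := X t 0 with haT
  set A : Matrix (Fin d) (Fin d) ℝ := Matrix.of fun i j => X t (e j) i - X t 0 i with hA
  -- the flow is an affine combination of the flows of basis points
  have hcomb : ∀ x : Fin d → ℝ,
      X t x = (∑ j, x j • X t (e j)) + (1 - ∑ j, x j) • X t 0 := by
    intro x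
    set G : ℝ → Fin d → ℝ :=
      fun τ => (∑ j, x j • X τ (e j)) + (1 - ∑ j, x j) • X τ 0 with hG
    have hGd : ∀ τ, HasDerivAt G ((S τ) *ᵥ G τ + s τ) τ := by
      intro τ
      have hd1 : HasDerivAt G ((∑ j, x j • ((S τ) *ᵥ (X τ (e j)) + s τ)) +
          (1 - ∑ j, x j) • ((S τ) *ᵥ (X τ 0) + s τ)) τ := by
        apply HasDerivAt.add
        · exact HasDerivAt.fun_sum fun j _ => (hsol (e j) τ).const_smul (x j)
        · exact (hsol 0 τ).const_smul (1 - ∑ j, x j)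
      convert hd1 using 1
      have hsum1 : (S τ) *ᵥ (∑ j, x j • X τ (e j)) = ∑ j, x j • ((S τ) *ᵥ X τ (e j)) := by
        show (Matrix.mulVecLin (S τ)) _ = _
        rw [map_sum]; simp
      simp only [hG, Matrix.mulVec_add, Matrix.mulVec_smul, hsum1, smul_add,
        Finset.sum_add_distrib, ← Finset.sum_smul]
      module
    have h0 : X 0 x = G 0 := by
      have h1 : ∀ j : Fin d, x j • e j = Pi.single j (x j) := fun j => by
        simp only [he, ← Pi.single_smul, smul_eq_mul, mul_one]
      simp only [hG, hX0, smul_zero, add_zero, h1, Finset.univ_sum_single]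
    exact affine_ode_unique S s hS_cont (fun τ => X τ x) G (hsol x) hGd 0 t h0
  have hAff : ∀ x, X t x = A *ᵥ x + aT := by
    intro x
    rw [hcomb x]
    funext i
    simp only [Pi.add_apply, Finset.sum_apply, Pi.smul_apply, smul_eq_mul,
      Matrix.mulVec, dotProduct, hA, Matrix.of_apply, haT, sub_mul,
      Finset.sum_sub_distrib, ← Finset.sum_mul]
    have : ∑ j, X t (e j) i * x j = ∑ j, x j * X t (e j) i :=
      Finset.sum_congr rfl fun j _ => mul_comm _ _
    rw [this, ← Finset.mul_sum]; ring
  have hinj : Function.Injective (X t) := by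
    intro x y hxy
    have h2 := affine_ode_unique S s hS_cont (fun τ => X τ x) (fun τ => X τ y)
      (hsol x) (hsol y) t 0 hxy
    simpa [hX0] using h2
  have hAunit : IsUnit A.det := by
    rw [← Matrix.isUnit_iff_isUnit_det]
    apply Matrix.mulVec_injective_iff_isUnit.mp
    intro x y hxy
    exact hinj (by rw [hAff, hAff, hxy])
  refine ⟨A *ᵥ m₀ + aT, A * Sig₀ * Aᵀ, posDef_conj A Sig₀ hAunit hSig₀, ?_⟩
  have hXT : X t = ⇑(affEquiv A hAunit aT) := funext fun x => hAff x
  rw [hμ₀, hXT, map_equiv_withDensity, map_affEquiv_volume]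
  have hsymm : ∀ y, (affEquiv A hAunit aT).symm y = A⁻¹ *ᵥ (y - aT) := fun y => rfl
  ext s' hs'
  rw [withDensity_apply _ hs', withDensity_apply _ hs', Measure.restrict_smul,
    lintegral_smul_measure, smul_eq_mul, ← lintegral_const_mul' _ _ ENNReal.ofReal_ne_top]
  apply lintegral_congr
  intro y
  rw [hsymm, ← ENNReal.ofReal_mul (inv_nonneg.mpr (abs_nonneg _)),
    elliptic_transform A hAunit aT m₀ Sig₀ g y]
end

section
/- Consider the matrix ODE system ṁ_t = B m_t + b, Σ̇_t = B Σ_t + Σ_t Bᵀ with B symmetric, constant in time. Its solution is m_1 = e^B m_0 + (e^B B† + B^⊥ − B†) b and Σ_1 = e^B Σ_0 e^B, where B† is the Moore–Penrose pseudoinverse of B and B^⊥ = I − B B† is the projector onto the kernel of B. -/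
open Matrix NormedSpace

attribute [local instance] Matrix.linftyOpNormedRing Matrix.linftyOpNormedAlgebra

noncomputable def matCLE (d : ℕ) : (Fin d → Fin d → ℝ) ≃L[ℝ] Matrix (Fin d) (Fin d) ℝ :=
  (Matrix.ofLinearEquiv ℝ).toContinuousLinearEquiv

noncomputable def mulVecCLM (d : ℕ) :
    Matrix (Fin d) (Fin d) ℝ →L[ℝ] (Fin d → ℝ) →L[ℝ] (Fin d → ℝ) :=
  LinearMap.toContinuousLinearMap
    { toFun := fun M => LinearMap.toContinuousLinearMap M.mulVecLin
      map_add' := by intro M N; ext v i; simp [Matrix.add_mulVec]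
      map_smul' := by intro c M; ext v i; simp [Matrix.smul_mulVec] }

@[simp] lemma mulVecCLM_apply {d : ℕ} (M : Matrix (Fin d) (Fin d) ℝ) (v : Fin d → ℝ) :
    mulVecCLM d M v = M.mulVec v := rfl

lemma mul_exp_eq_self {d : ℕ} (C M : Matrix (Fin d) (Fin d) ℝ) (h : C * M = 0) (t : ℝ) :
    C * exp (t • M) = C := by
  have hconst : ∀ s : ℝ, HasDerivAt (fun τ : ℝ => C * exp (τ • M)) 0 s := by
    intro s
    have := (hasDerivAt_exp_smul_const' M s).const_mul C
    rwa [← mul_assoc, h, zero_mul] at this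
  have h0 : (fun τ : ℝ => C * exp (τ • M)) t = (fun τ : ℝ => C * exp (τ • M)) 0 :=
    is_const_of_deriv_eq_zero (fun s => (hconst s).differentiableAt)
      (fun s => (hconst s).deriv) t 0
  simpa [exp_zero] using h0

lemma exp_mul_eq_self {d : ℕ} (M C : Matrix (Fin d) (Fin d) ℝ) (h : M * C = 0) (t : ℝ) :
    exp (t • M) * C = C := by
  have hconst : ∀ s : ℝ, HasDerivAt (fun τ : ℝ => exp (τ • M) * C) 0 s := by
    intro s
    have := (hasDerivAt_exp_smul_const M s).mul_const C
    rwa [mul_assoc, h, mul_zero] at this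
  have h0 : (fun τ : ℝ => exp (τ • M) * C) t = (fun τ : ℝ => exp (τ • M) * C) 0 :=
    is_const_of_deriv_eq_zero (fun s => (hconst s).differentiableAt)
      (fun s => (hconst s).deriv) t 0
  simpa [exp_zero] using h0

lemma pinv_comm {d : ℕ} (B Bp : Matrix (Fin d) (Fin d) ℝ) (hB : B.IsSymm)
    (hBp1 : B * Bp * B = B) (hBp3 : (B * Bp).IsSymm) (hBp4 : (Bp * B).IsSymm) :
    Bp * B = B * Bp := by
  have hBt : Bᵀ = B := hB
  have h3 : B * Bp = Bpᵀ * B := by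
    calc B * Bp = (B * Bp)ᵀ := hBp3.symm
    _ = Bpᵀ * Bᵀ := Matrix.transpose_mul _ _
    _ = Bpᵀ * B := by rw [hBt]
  have h4 : Bp * B = B * Bpᵀ := by
    calc Bp * B = (Bp * B)ᵀ := hBp4.symm
    _ = Bᵀ * Bpᵀ := Matrix.transpose_mul _ _
    _ = B * Bpᵀ := by rw [hBt]
  have e1 : B * Bp = (B * Bp) * (Bp * B) := by
    calc B * Bp = Bpᵀ * B := h3
    _ = Bpᵀ * (B * Bp * B) := by rw [hBp1]
    _ = (Bpᵀ * B) * (Bp * B) := by simp only [mul_assoc]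
    _ = (B * Bp) * (Bp * B) := by rw [← h3]
  have e2 : Bp * B = (B * Bp) * (Bp * B) := by
    calc Bp * B = B * Bpᵀ := h4
    _ = (B * Bp * B) * Bpᵀ := by rw [hBp1]
    _ = (B * Bp) * (B * Bpᵀ) := by simp only [mul_assoc]
    _ = (B * Bp) * (Bp * B) := by rw [← h4]
  exact e2.trans e1.symm

/-- for symmetric constant `B`, the ODE system `ṁ_t = B m_t + b`,
`Σ̇_t = B Σ_t + Σ_t Bᵀ` has the solution
`m_1 = e^B m_0 + (e^B B† + B^⊥ − B†) b`, `Σ_1 = e^B Σ_0 e^B`,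
where `B†` is the Moore–Penrose pseudoinverse and `B^⊥ = I − B B†`. -/
theorem affine_matrix_ode_solution
    (d : ℕ)
    (B : Matrix (Fin d) (Fin d) ℝ) (hB : B.IsSymm) (b : Fin d → ℝ)
    -- `Bp` is the Moore–Penrose pseudoinverse of `B`:
    (Bp : Matrix (Fin d) (Fin d) ℝ)
    (hBp1 : B * Bp * B = B) (hBp2 : Bp * B * Bp = Bp)
    (hBp3 : (B * Bp).IsSymm) (hBp4 : (Bp * B).IsSymm)
    (m : ℝ → Fin d → ℝ) (Sigma : ℝ → Matrix (Fin d) (Fin d) ℝ)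
    (hSigma0 : (Sigma 0).PosDef)
    (hm_ode : ∀ t, ∀ i, HasDerivAt (fun τ => m τ i) ((B.mulVec (m t) + b) i) t)
    (hSigma_ode : ∀ t, ∀ i j, HasDerivAt (fun τ => Sigma τ i j)
      ((B * Sigma t + Sigma t * Bᵀ) i j) t) :
    m 1 = (NormedSpace.exp B).mulVec (m 0)
        + (NormedSpace.exp B * Bp + (1 - B * Bp) - Bp).mulVec b ∧
    Sigma 1 = NormedSpace.exp B * Sigma 0 * NormedSpace.exp B := by
  have hBt : Bᵀ = B := hB
  have hcomm : Bp * B = B * Bp := pinv_comm B Bp hB hBp1 hBp3 hBp4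
  set e : ℝ → Matrix (Fin d) (Fin d) ℝ := fun τ => exp (τ • (-B)) with he
  have hE : ∀ t : ℝ, HasDerivAt e ((-B) * e t) t := fun t =>
    hasDerivAt_exp_smul_const' (-B) t
  have hcommE : ∀ t : ℝ, e t * B = B * e t := by
    intro t
    have h : Commute (t • (-B)) B := ((Commute.refl B).neg_left).smul_left t
    exact (h.exp_left).eq
  have hm : ∀ t : ℝ, HasDerivAt m (B.mulVec (m t) + b) t := fun t =>
    hasDerivAt_pi.mpr (hm_ode t)
  have hS : ∀ t : ℝ, HasDerivAt Sigma (B * Sigma t + Sigma t * Bᵀ) t := by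
    intro t
    have h1 : HasDerivAt (fun τ => (matCLE d).symm (Sigma τ))
        ((matCLE d).symm (B * Sigma t + Sigma t * Bᵀ)) t :=
      hasDerivAt_pi.mpr fun i => hasDerivAt_pi.mpr fun j => hSigma_ode t i j
    have h2 := ((matCLE d).toContinuousLinearMap.hasFDerivAt).comp_hasDerivAt t h1
    simp only [ContinuousLinearEquiv.coe_coe, Function.comp_def,
      ContinuousLinearEquiv.apply_symm_apply] at h2
    exact h2
  -- basic exponential facts
  have he0 : e 0 = 1 := by simp [he, exp_zero]
  have he1 : e 1 = exp (-B) := by simp [he]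
  have hEE1 : exp B * exp (-B) = 1 := by
    exact (exp_add_of_commute ((Commute.refl B).neg_right)).symm.trans (by simp [exp_zero])
  have hEE2 : exp (-B) * exp B = 1 := by
    exact (exp_add_of_commute ((Commute.refl B).neg_left)).symm.trans (by simp [exp_zero])
  have hBpBB : Bp * B * B = B := by rw [hcomm]; exact hBp1
  have hBBBp : B * (B * Bp) = B := by
    rw [← hcomm, ← mul_assoc]; exact hBp1
  -- the m-part
  have key : ∀ t : ℝ, e t - Bp * B * e t = 1 - B * Bp := by
    intro t
    have k1 : (1 - Bp * B) * (-B) = 0 := by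
      rw [sub_mul, one_mul, mul_neg, hBpBB, sub_self]
    have k2 := mul_exp_eq_self (1 - Bp * B) (-B) k1 t
    rw [sub_mul, one_mul] at k2
    rw [k2, hcomm]
  constructor
  · -- mean part
    set F : ℝ → Fin d → ℝ := fun t =>
      (e t).mulVec (m t) + (Bp * e t).mulVec b - t • ((1 - B * Bp).mulVec b) with hF
    have hF' : ∀ t : ℝ, HasDerivAt F 0 t := by
      intro t
      have t1 : HasDerivAt (fun τ => (mulVecCLM d) (e τ) (m τ))
          ((mulVecCLM d) ((-B) * e t) (m t) + (mulVecCLM d) (e t) (B.mulVec (m t) + b)) t :=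
        HasDerivAt.clm_apply
          (((mulVecCLM d).hasFDerivAt).comp_hasDerivAt t (hE t)) (hm t)
      have t2 : HasDerivAt (fun τ => (mulVecCLM d) (Bp * e τ) b)
          ((mulVecCLM d) (Bp * ((-B) * e t)) b) t := by
        have := HasDerivAt.clm_apply
          (((mulVecCLM d).hasFDerivAt).comp_hasDerivAt t ((hE t).const_mul Bp))
          (hasDerivAt_const t b)
        simp only [Function.comp_apply, map_zero, add_zero] at this
        exact this
      have t3 : HasDerivAt (fun τ : ℝ => τ • ((1 - B * Bp).mulVec b))
          ((1 - B * Bp).mulVec b) t := by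
        simpa using (hasDerivAt_id t).smul_const ((1 - B * Bp).mulVec b)
      have tall := (t1.add t2).sub t3
      have hD : (mulVecCLM d) ((-B) * e t) (m t) + (mulVecCLM d) (e t) (B.mulVec (m t) + b)
          + (mulVecCLM d) (Bp * ((-B) * e t)) b - (1 - B * Bp).mulVec b = 0 := by
        have hba : Bp * ((-B) * e t) = (1 - B * Bp) - e t := by
          rw [neg_mul, mul_neg, ← mul_assoc, ← key t]; abel
        have hma : (-B) * e t = -(e t * B) := by rw [hcommE t, neg_mul]
        simp only [mulVecCLM_apply]
        rw [Matrix.mulVec_add, Matrix.mulVec_mulVec, hba, hma]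
        simp only [Matrix.sub_mulVec, Matrix.neg_mulVec, Matrix.one_mulVec]
        abel
      rw [hD] at tall
      exact tall
    have hF10 : F 1 = F 0 :=
      is_const_of_deriv_eq_zero (fun s => (hF' s).differentiableAt)
        (fun s => (hF' s).deriv) 1 0
    rw [hF] at hF10
    simp only [he0, he1, Matrix.one_mulVec, mul_one, zero_smul, sub_zero, one_smul] at hF10
    -- hF10 : (exp (-B)).mulVec (m 1) + (Bp * exp (-B)).mulVec b - (1-B*Bp).mulVec b
    --        = m 0 + Bp.mulVec b
    have hsolve : (exp (-B)).mulVec (m 1)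
        = m 0 + Bp.mulVec b - (Bp * exp (-B)).mulVec b + (1 - B * Bp).mulVec b := by
      rw [← sub_eq_zero] at hF10 ⊢
      rw [← hF10]; abel
    have hcBpE : exp B * Bp = Bp * exp B := by
      have h : Commute B Bp := hcomm.symm
      exact ((h.exp_left).eq)
    have hEperp : exp B * (1 - B * Bp) = 1 - B * Bp := by
      have k : B * (1 - B * Bp) = 0 := by
        rw [mul_sub, mul_one, hBBBp, sub_self]
      have := exp_mul_eq_self B (1 - B * Bp) k 1
      rwa [one_smul] at this
    calc m 1 = ((exp B * exp (-B))).mulVec (m 1) := by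
          rw [hEE1, Matrix.one_mulVec]
    _ = (exp B).mulVec ((exp (-B)).mulVec (m 1)) := by
          rw [Matrix.mulVec_mulVec]
    _ = (exp B).mulVec (m 0 + Bp.mulVec b - (Bp * exp (-B)).mulVec b
          + (1 - B * Bp).mulVec b) := by rw [hsolve]
    _ = (exp B).mulVec (m 0) + (exp B * Bp).mulVec b
          - (exp B * (Bp * exp (-B))).mulVec b
          + (exp B * (1 - B * Bp)).mulVec b := by
          rw [Matrix.mulVec_add, Matrix.mulVec_sub, Matrix.mulVec_add,
            Matrix.mulVec_mulVec, Matrix.mulVec_mulVec, Matrix.mulVec_mulVec]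
    _ = (exp B).mulVec (m 0) + (exp B * Bp).mulVec b - Bp.mulVec b
          + (1 - B * Bp).mulVec b := by
          rw [hEperp, ← mul_assoc, hcBpE, mul_assoc, hEE1, mul_one]
    _ = (exp B).mulVec (m 0) + (exp B * Bp + (1 - B * Bp) - Bp).mulVec b := by
          simp only [Matrix.sub_mulVec, Matrix.add_mulVec, Matrix.one_mulVec]; abel
  · -- covariance part
    have hG' : ∀ t : ℝ, HasDerivAt (fun τ => e τ * Sigma τ * e τ) 0 t := by
      intro t
      have h := ((hE t).mul (hS t)).mul (hE t)
      have hc := hcommE t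
      have hz : ((-B) * e t * Sigma t + e t * (B * Sigma t + Sigma t * Bᵀ)) * e t
          + e t * Sigma t * ((-B) * e t) = 0 := by
        rw [hBt, mul_add (e t), ← mul_assoc (e t) B (Sigma t), hc]
        simp only [add_mul, neg_mul, mul_neg, mul_assoc]
        abel
      rw [show (e * Sigma) t = e t * Sigma t from rfl, hz] at h
      exact h
    have hG10 : (fun τ => e τ * Sigma τ * e τ) 1 = (fun τ => e τ * Sigma τ * e τ) 0 :=
      is_const_of_deriv_eq_zero (fun s => (hG' s).differentiableAt)
        (fun s => (hG' s).deriv) 1 0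
    simp only [he0, he1, one_mul, mul_one] at hG10
    -- hG10 : exp (-B) * Sigma 1 * exp (-B) = Sigma 0
    calc Sigma 1 = (exp B * exp (-B)) * Sigma 1 * (exp (-B) * exp B) := by
          rw [hEE1, hEE2, one_mul, mul_one]
    _ = exp B * (exp (-B) * Sigma 1 * exp (-B)) * exp B := by
          simp only [mul_assoc]
    _ = exp B * Sigma 0 * exp B := by rw [hG10]
end

section
/- Given Σ_0, Σ_1 symmetric positive definite, the equation Σ_1 = e^B Σ_0 e^B with B symmetric has the unique symmetric solution B = log(Σ_0^{-1/2} (Σ_0^{1/2} Σ_1 Σ_0^{1/2})^{1/2} Σ_0^{-1/2}). -/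
open scoped MatrixOrder
open Matrix

private lemma mySymm_iff_herm {n : Type*} (A : Matrix n n ℝ) :
    A.IsSymm ↔ A.IsHermitian := by
  rw [Matrix.IsHermitian, Matrix.conjTranspose_eq_transpose_of_trivial, Matrix.IsSymm]

private lemma myPosDef_of_isUnit {n : Type*} [Fintype n] [DecidableEq n]
    {A : Matrix n n ℝ} (hA : A.PosSemidef) (h : IsUnit A) : A.PosDef := by
  exact hA.posDef_iff_isUnit.mpr h

private lemma myExp_posDef {n : Type*} [Fintype n] [DecidableEq n]
    {B : Matrix n n ℝ} (hB : B.IsHermitian) : (NormedSpace.exp B).PosDef := by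
  have hhalfH : ((1/2 : ℝ) • B).IsHermitian := by
    rw [Matrix.IsHermitian, Matrix.conjTranspose_smul, star_trivial, hB.eq]
  have hhalf : (NormedSpace.exp ((1/2 : ℝ) • B)).IsHermitian :=
    Matrix.IsHermitian.exp hhalfH
  have hsum : (1/2 : ℝ) • B + (1/2 : ℝ) • B = B := by
    rw [← add_smul]; norm_num
  have hexp : NormedSpace.exp B
      = NormedSpace.exp ((1/2 : ℝ) • B) * NormedSpace.exp ((1/2 : ℝ) • B) := by
    conv_lhs => rw [← hsum]
    exact Matrix.exp_add_of_commute _ _ (Commute.refl _)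
  have hpsd : (NormedSpace.exp B).PosSemidef := by
    rw [hexp]
    nth_rewrite 1 [← hhalf.eq]
    exact Matrix.posSemidef_conjTranspose_mul_self _
  exact myPosDef_of_isUnit hpsd (Matrix.isUnit_exp B)

/-- for `Σ₀, Σ₁` symmetric positive definite, the equation
`Σ₁ = e^B Σ₀ e^B` has a unique symmetric solution, namely
`B = log(Σ₀^{-1/2} (Σ₀^{1/2} Σ₁ Σ₀^{1/2})^{1/2} Σ₀^{-1/2})`; equivalently, the unique
symmetric solution satisfies `e^B = Σ₀^{-1/2} (Σ₀^{1/2} Σ₁ Σ₀^{1/2})^{1/2} Σ₀^{-1/2}`. -/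
theorem exp_conjugation_equation_unique_symmetric_solution
    (d : ℕ)
    (Sig₀ Sig₁ : Matrix (Fin d) (Fin d) ℝ)
    (hSig₀ : Sig₀.PosDef) (hSig₁ : Sig₁.PosDef)
    -- `S0` is the principal square root `Σ₀^{1/2}`:
    (S0 : Matrix (Fin d) (Fin d) ℝ) (hS0 : S0.PosSemidef) (hS0sq : S0 * S0 = Sig₀)
    -- `T` is the principal square root `(Σ₀^{1/2} Σ₁ Σ₀^{1/2})^{1/2}`:
    (T : Matrix (Fin d) (Fin d) ℝ) (hT : T.PosSemidef) (hTsq : T * T = S0 * Sig₁ * S0) :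
    (∃! B : Matrix (Fin d) (Fin d) ℝ,
      B.IsSymm ∧ Sig₁ = NormedSpace.exp B * Sig₀ * NormedSpace.exp B) ∧
    (∀ B : Matrix (Fin d) (Fin d) ℝ, B.IsSymm →
      Sig₁ = NormedSpace.exp B * Sig₀ * NormedSpace.exp B →
      NormedSpace.exp B = S0⁻¹ * T * S0⁻¹) := by
  -- Invertibility of S0 and T
  have hS0det : IsUnit S0.det := by
    have : S0.det * S0.det = Sig₀.det := by rw [← Matrix.det_mul, hS0sq]
    have hpos := hSig₀.det_pos
    exact isUnit_iff_ne_zero.mpr (fun h => by simp [h] at this; exact hpos.ne' this.symm)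
  have hTdet : IsUnit T.det := by
    have : T.det * T.det = S0.det * Sig₁.det * S0.det := by
      rw [← Matrix.det_mul, hTsq, Matrix.det_mul, Matrix.det_mul]
    have hpos := hSig₁.det_pos
    refine isUnit_iff_ne_zero.mpr (fun h => ?_)
    rw [h, mul_zero] at this
    have : S0.det * Sig₁.det * S0.det ≠ 0 := by
      have := hS0det.ne_zero
      positivity
    simp_all
  have hS0u : IsUnit S0 := (Matrix.isUnit_iff_isUnit_det _).mpr hS0det
  have hS0pd : S0.PosDef := myPosDef_of_isUnit hS0 hS0u
  have hIS : S0⁻¹ * S0 = 1 := Matrix.nonsing_inv_mul _ hS0det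
  have hSI : S0 * S0⁻¹ = 1 := Matrix.mul_nonsing_inv _ hS0det
  have hS0invH : (S0⁻¹).IsHermitian := hS0.1.inv
  set M : Matrix (Fin d) (Fin d) ℝ := S0⁻¹ * T * S0⁻¹ with hM
  have hMpsd : M.PosSemidef := by
    have := hT.conjTranspose_mul_mul_same S0⁻¹
    rwa [hS0invH.eq] at this
  have hMu : IsUnit M := by
    have hS0invu : IsUnit S0⁻¹ := (Matrix.isUnit_nonsing_inv_iff).mpr hS0u
    exact (hS0invu.mul ((Matrix.isUnit_iff_isUnit_det _).mpr hTdet)).mul hS0invu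
  have hMpd : M.PosDef := myPosDef_of_isUnit hMpsd hMu
  -- M solves the equation
  have hMsol : Sig₁ = M * Sig₀ * M := by
    have : M * Sig₀ * M = S0⁻¹ * (T * T) * S0⁻¹ := by
      rw [hM, ← hS0sq]
      calc S0⁻¹ * T * S0⁻¹ * (S0 * S0) * (S0⁻¹ * T * S0⁻¹)
          = S0⁻¹ * T * ((S0⁻¹ * S0) * (S0 * S0⁻¹)) * T * S0⁻¹ := by
            simp only [Matrix.mul_assoc]
        _ = S0⁻¹ * (T * T) * S0⁻¹ := by rw [hIS, hSI]; simp only [Matrix.mul_one,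
            Matrix.mul_assoc]
    rw [this, hTsq]
    calc Sig₁ = (S0⁻¹ * S0) * Sig₁ * (S0 * S0⁻¹) := by rw [hIS, hSI]; simp
      _ = S0⁻¹ * (S0 * Sig₁ * S0) * S0⁻¹ := by simp only [Matrix.mul_assoc]
  -- Uniqueness of positive definite solution of E Σ₀ E = Σ₁
  have key : ∀ E : Matrix (Fin d) (Fin d) ℝ, E.PosSemidef →
      Sig₁ = E * Sig₀ * E → E = M := by
    intro E hE hEsol
    have hconj : (S0 * E * S0).PosSemidef := by
      have := hE.conjTranspose_mul_mul_same S0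
      rwa [hS0.1.eq] at this
    have hsq : (S0 * E * S0) ^ 2 = T ^ 2 := by
      rw [sq, sq, hTsq, hEsol, ← hS0sq]
      simp only [Matrix.mul_assoc]
    have hST : S0 * E * S0 = T := (CFC.sq_eq_sq_iff _ _ hconj.nonneg hT.nonneg).mp hsq
    calc E = (S0⁻¹ * S0) * E * (S0 * S0⁻¹) := by rw [hIS, hSI]; simp
      _ = S0⁻¹ * (S0 * E * S0) * S0⁻¹ := by simp only [Matrix.mul_assoc]
      _ = M := by rw [hST]
  -- the uniqueness-of-exponential statement
  have expEq : ∀ B : Matrix (Fin d) (Fin d) ℝ, B.IsSymm →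
      Sig₁ = NormedSpace.exp B * Sig₀ * NormedSpace.exp B →
      NormedSpace.exp B = M := by
    intro B hBsymm hBsol
    exact key _ (myExp_posDef ((mySymm_iff_herm B).mp hBsymm)).posSemidef hBsol
  -- set up normed instances for the CFC
  letI : NormedRing (Matrix (Fin d) (Fin d) ℝ) := Matrix.instL2OpNormedRing
  letI : NormedAlgebra ℝ (Matrix (Fin d) (Fin d) ℝ) := Matrix.instL2OpNormedAlgebra
  have hMsa : IsSelfAdjoint M := hMpd.1
  have hMspec : ∀ x ∈ spectrum ℝ M, 0 < x := by
    intro x hx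
    rw [hMpd.1.spectrum_real_eq_range_eigenvalues] at hx
    obtain ⟨i, rfl⟩ := hx
    exact hMpd.eigenvalues_pos i
  have hexplog : NormedSpace.exp (CFC.log M) = M := CFC.exp_log M hMpd.isStrictlyPositive
  have hlogsa : IsSelfAdjoint (CFC.log M) := IsSelfAdjoint.log
  refine ⟨⟨CFC.log M, ⟨(mySymm_iff_herm _).mpr hlogsa, by rw [hexplog]; exact hMsol⟩, ?_⟩, expEq⟩
  intro B ⟨hBsymm, hBsol⟩
  have hBsa : IsSelfAdjoint B := (mySymm_iff_herm B).mp hBsymm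
  have : NormedSpace.exp B = M := expEq B hBsymm hBsol
  calc B = CFC.log (NormedSpace.exp B) := (CFC.log_exp B hBsa).symm
    _ = CFC.log M := by rw [this]
end

section
/- Let ξ(t) = (κ s₀ + λ) e^{-2λβ t} − κ s₀ with β = (1/(2λ)) ln((λ/s₀ + κ)/(λ/s₁ + κ)) for s₀, s₁, λ, κ > 0, s₀ ≠ s₁. Then ξ(1) = λ s₀/s₁ and ∫₀¹ ξ(t)^{-1} dt = (1/(2λβ κ s₀)) ln(s₁/s₀) − 1/(κ s₀). -/
set_option maxHeartbeats 1000000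


open Real

/-- with `ξ(t) = (κs₀+λ)e^{−2λβt} − κs₀` and
`β = (1/(2λ)) ln((λ/s₀+κ)/(λ/s₁+κ))`, one has `ξ(1) = λs₀/s₁` and
`∫₀¹ ξ(t)⁻¹ dt = (1/(2λβκs₀)) ln(s₁/s₀) − 1/(κs₀)`. -/
theorem kw_xi_integral
    (lam κ s₀ s₁ : ℝ) (hlam : 0 < lam) (hκ : 0 < κ)
    (hs₀ : 0 < s₀) (hs₁ : 0 < s₁) (hne : s₀ ≠ s₁)
    (β : ℝ) (hβ : β = (1 / (2 * lam)) * Real.log ((lam / s₀ + κ) / (lam / s₁ + κ)))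
    (ξ : ℝ → ℝ)
    (hξ : ∀ t, ξ t = (κ * s₀ + lam) * Real.exp (-2 * lam * β * t) - κ * s₀) :
    ξ 1 = lam * s₀ / s₁ ∧
    (∫ t in (0 : ℝ)..1, (ξ t)⁻¹)
      = (1 / (2 * lam * β * (κ * s₀))) * Real.log (s₁ / s₀) - 1 / (κ * s₀) := by
  have hfun : ξ = fun t => (κ * s₀ + lam) * Real.exp (-2 * lam * β * t) - κ * s₀ :=
    funext hξ
  subst hfun
  have hX0 : 0 < lam / s₀ + κ := by positivity
  have hX1 : 0 < lam / s₁ + κ := by positivity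
  set a := κ * s₀ + lam with ha
  set c := κ * s₀ with hc
  have hapos : 0 < a := by positivity
  have hcpos : 0 < c := by positivity
  set r := -2 * lam * β with hr
  -- exp r
  have hrlog : r = Real.log ((lam / s₁ + κ) / (lam / s₀ + κ)) := by
    rw [hr, hβ,
      show (lam / s₁ + κ) / (lam / s₀ + κ) = ((lam / s₀ + κ) / (lam / s₁ + κ))⁻¹ from
        (inv_div _ _).symm, Real.log_inv]
    field_simp
  have hexp_r : Real.exp r = (lam / s₁ + κ) / (lam / s₀ + κ) := by
    rw [hrlog, Real.exp_log (div_pos hX1 hX0)]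
  -- β ≠ 0, r ≠ 0
  have hβne : β ≠ 0 := by
    intro h
    have h0 : Real.log ((lam / s₁ + κ) / (lam / s₀ + κ)) = 0 := by
      rw [← hrlog, hr, h]; ring
    rcases Real.log_eq_zero.mp h0 with h | h | h
    · exact absurd h (div_pos hX1 hX0).ne'
    · have h1 : lam / s₁ + κ = lam / s₀ + κ := (div_eq_one_iff_eq hX0.ne').mp h
      have h2 : lam / s₁ = lam / s₀ := by linarith
      have h3 : lam * s₀ = lam * s₁ := (div_eq_div_iff hs₁.ne' hs₀.ne').mp h2
      exact hne (mul_left_cancel₀ hlam.ne' h3)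
    · linarith [div_pos hX1 hX0]
  have hrne : r ≠ 0 := by
    rw [hr]
    intro h
    have : lam * β = 0 := by linarith
    rcases mul_eq_zero.mp this with h | h
    · exact hlam.ne' h
    · exact hβne h
  -- ξ values
  have hξ1 : a * Real.exp (-2 * lam * β * 1) - c = lam * s₀ / s₁ := by
    rw [mul_one, ← hr, hexp_r, ha, hc]
    field_simp
    ring
  have hξ0 : a * Real.exp (-2 * lam * β * 0) - c = lam := by
    rw [mul_zero, Real.exp_zero, ha, hc]; ring
  -- positivity on [0,1]
  have hbound : 0 < a * Real.exp (min 0 r) - c := by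
    rcases le_total 0 r with h | h
    · rw [min_eq_left h, Real.exp_zero, ha, hc]
      linarith
    · rw [min_eq_right h, hexp_r]
      have : a * ((lam / s₁ + κ) / (lam / s₀ + κ)) - c = lam * s₀ / s₁ := by
        rw [ha, hc]; field_simp; ring
      rw [this]; positivity
  have hξpos : ∀ t ∈ Set.Icc (0:ℝ) 1, 0 < a * Real.exp (-2 * lam * β * t) - c := by
    intro t ht
    have h1 : min 0 r ≤ r * t := by
      rcases le_total 0 r with h | h
      · exact le_trans (min_le_left _ _) (mul_nonneg h ht.1)
      · refine le_trans (min_le_right _ _) ?_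
        nlinarith [ht.1, ht.2]
    have h2 : Real.exp (min 0 r) ≤ Real.exp (r * t) := Real.exp_le_exp.2 h1
    have : -2 * lam * β * t = r * t := by rw [hr]
    rw [this]
    nlinarith [mul_le_mul_of_nonneg_left h2 hapos.le]
  refine ⟨hξ1, ?_⟩
  -- FTC
  have hderiv : ∀ t ∈ Set.uIcc (0:ℝ) 1,
      HasDerivAt (fun t => (1 / (c * r)) * Real.log (a * Real.exp (r * t) - c) - t / c)
        ((a * Real.exp (-2 * lam * β * t) - c)⁻¹) t := by
    intro t ht
    have htI : t ∈ Set.Icc (0:ℝ) 1 := by rwa [Set.uIcc_of_le (by norm_num)] at ht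
    have hξt : 0 < a * Real.exp (r * t) - c := by
      have := hξpos t htI
      rwa [show -2 * lam * β * t = r * t from by rw [hr]] at this
    have h1 : HasDerivAt (fun t : ℝ => r * t) r t := by
      simpa using (hasDerivAt_id t).const_mul r
    have h2 : HasDerivAt (fun t => a * Real.exp (r * t) - c)
        (a * (Real.exp (r * t) * r)) t := (h1.exp.const_mul a).sub_const c
    have h3 := (h2.log hξt.ne').const_mul (1 / (c * r))
    have h4 := h3.sub ((hasDerivAt_id t).div_const c)
    refine h4.congr_deriv ?_
    rw [show -2 * lam * β * t = r * t from by rw [hr]]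
    field_simp
    ring
  have hint : IntervalIntegrable
      (fun t => (a * Real.exp (-2 * lam * β * t) - c)⁻¹) MeasureTheory.volume 0 1 := by
    apply ContinuousOn.intervalIntegrable
    apply ContinuousOn.inv₀ (Continuous.continuousOn (by continuity))
    intro t ht
    have htI : t ∈ Set.Icc (0:ℝ) 1 := by rwa [Set.uIcc_of_le (by norm_num)] at ht
    exact (hξpos t htI).ne'
  have hFTC := intervalIntegral.integral_eq_sub_of_hasDerivAt hderiv hint
  rw [hFTC]
  rw [show r * 1 = -2 * lam * β * 1 from by rw [hr], show r * 0 = -2 * lam * β * 0 from by rw [hr],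
    hξ1, hξ0]
  rw [Real.log_div (mul_pos hlam hs₀).ne' hs₁.ne', Real.log_mul hlam.ne' hs₀.ne',
    Real.log_div hs₁.ne' hs₀.ne', hr]
  field_simp
  ring
end
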